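/- Let r > 0, Φ ≥ 0 and c ∈ (0,∞) be reals. Let W : ℝ → ℝ vanish on (−∞,0), be nonnegative, and be such that x ↦ e^{−Φx}·W(x) is nondecreasing on (0,∞) and converges to c as x → ∞. Let V : ℝ → ℝ be nonnegative, vanish on (−∞,0), and be integrable on compact intervals. Then for every x ∈ ℝ, lim_{a → −∞} [W(x−a) + r·∫₀ˣ V(x−y)·W(y−a) dy] / W(−a) = e^{Φx}·(1 + r·∫₀ˣ e^{−Φz}·V(z) dz). -/

import Mathlib

open MeasureTheory Filter Set

/-- Lemma B.1(i), convergence of `W_a^{(q,r)}(x)/W^{(q)}(-a)` as `a → -∞`. -/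
theorem stmt_1 (r Φ c : ℝ) (hr : 0 < r) (hΦ : 0 ≤ Φ) (hc : 0 < c)
    (W V : ℝ → ℝ)
    (hW0 : ∀ x < 0, W x = 0) (hWnn : ∀ x, 0 ≤ W x)
    (hWmono : MonotoneOn (fun x => Real.exp (-Φ * x) * W x) (Set.Ioi 0))
    (hWlim : Tendsto (fun x => Real.exp (-Φ * x) * W x) atTop (nhds c))
    (hVnn : ∀ x, 0 ≤ V x) (hV0 : ∀ x < 0, V x = 0)
    (hVint : ∀ x y : ℝ, IntervalIntegrable V volume x y) :
    ∀ x : ℝ,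
      Tendsto (fun a => (W (x - a) + r * ∫ y in (0:ℝ)..x, V (x - y) * W (y - a)) / W (-a))
        atBot
        (nhds (Real.exp (Φ * x) * (1 + r * ∫ z in (0:ℝ)..x, Real.exp (-Φ * z) * V z))) := by
  intro x
  -- notation: g t = exp(-Φ t) * W t
  have hgW : ∀ t : ℝ, W t = Real.exp (Φ * t) * (Real.exp (-Φ * t) * W t) := by
    intro t
    rw [← mul_assoc, ← Real.exp_add]
    ring_nf
    simp
  -- g(b - a) → c as a → -∞
  have hshift : ∀ b : ℝ, Tendsto (fun a : ℝ => Real.exp (-Φ * (b - a)) * W (b - a))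
      atBot (nhds c) := by
    intro b
    refine hWlim.comp ?_
    have : Tendsto (fun a : ℝ => b + -a) atBot atTop :=
      tendsto_atTop_add_const_left atBot b tendsto_neg_atBot_atTop
    exact this.congr (fun a => by ring)
  have hgneg : Tendsto (fun a : ℝ => Real.exp (-Φ * (-a)) * W (-a)) atBot (nhds c) :=
    hWlim.comp tendsto_neg_atBot_atTop
  -- g t ≤ c for t > 0
  have hgle : ∀ t : ℝ, 0 < t → Real.exp (-Φ * t) * W t ≤ c := by
    intro t ht
    refine ge_of_tendsto hWlim ?_
    filter_upwards [eventually_ge_atTop t, eventually_gt_atTop (0:ℝ)] with s hs hs0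
    exact hWmono ht hs0 hs
  -- the ratio lemma
  have hratio : ∀ b : ℝ, Tendsto (fun a => W (b - a) / W (-a)) atBot
      (nhds (Real.exp (Φ * b))) := by
    intro b
    have h3 : Tendsto (fun a : ℝ => Real.exp (Φ * b) *
        ((Real.exp (-Φ * (b - a)) * W (b - a)) / (Real.exp (-Φ * (-a)) * W (-a)))) atBot
        (nhds (Real.exp (Φ * b) * (c / c))) :=
      ((hshift b).div hgneg hc.ne').const_mul _
    rw [div_self hc.ne', mul_one] at h3
    refine h3.congr (fun a => ?_)
    calc Real.exp (Φ * b) *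
          ((Real.exp (-Φ * (b - a)) * W (b - a)) / (Real.exp (-Φ * (-a)) * W (-a)))
        = (Real.exp (Φ * b) * Real.exp (-Φ * (b - a)) / Real.exp (-Φ * (-a))) *
            (W (b - a) / W (-a)) := by
          rw [mul_div_mul_comm]; ring
      _ = W (b - a) / W (-a) := by
          rw [← Real.exp_add, ← Real.exp_sub]
          have : Φ * b + -Φ * (b - a) - -Φ * (-a) = 0 := by ring
          rw [this, Real.exp_zero, one_mul]
  -- eventually g(-a) ≥ c/2
  have hev : ∀ᶠ a in atBot, c / 2 ≤ Real.exp (-Φ * (-a)) * W (-a) :=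
    hgneg.eventually (eventually_ge_nhds (by linarith))
  -- interval integrability of y ↦ V (x - y)
  have hVx : IntervalIntegrable (fun y => V (x - y)) volume 0 x := by
    simpa using ((hVint 0 x).comp_sub_left x).symm
  -- dominated convergence for the integral part
  have hDCT : Tendsto (fun a => ∫ y in (0:ℝ)..x, V (x - y) * W (y - a) / W (-a)) atBot
      (nhds (∫ y in (0:ℝ)..x, V (x - y) * Real.exp (Φ * y))) := by
    apply intervalIntegral.tendsto_integral_filter_of_dominated_convergence
      (bound := fun y => V (x - y) * (2 * Real.exp (Φ * max 0 x)))
    · -- measurability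
      filter_upwards [eventually_le_atBot (min 0 x - 1)] with a ha
      have hGmono : Monotone (fun t : ℝ => Real.exp (-Φ * max 1 t) * W (max 1 t)) := by
        intro s t hst
        exact hWmono (by simp : (0:ℝ) < max 1 s) (by simp : (0:ℝ) < max 1 t)
          (max_le_max le_rfl hst)
      have hmeas2 : Measurable (fun y : ℝ =>
          Real.exp (Φ * (y - a)) *
            (Real.exp (-Φ * max 1 (y - a)) * W (max 1 (y - a))) / W (-a)) := by
        apply Measurable.div_const
        exact ((measurable_id.sub_const a).const_mul Φ).exp.mul
          (hGmono.measurable.comp (measurable_id.sub_const a))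
      have hVm : AEStronglyMeasurable (fun y => V (x - y)) (volume.restrict (Set.uIoc (0:ℝ) x)) :=
        (intervalIntegrable_iff.mp hVx).aestronglyMeasurable
      refine (hVm.mul hmeas2.aestronglyMeasurable).congr ?_
      filter_upwards [ae_restrict_mem measurableSet_uIoc] with y hy
      have hy1 : (1:ℝ) ≤ y - a := by
        have h0 : min 0 x < y := hy.1
        linarith
      simp only [Pi.mul_apply]
      rw [max_eq_right hy1, ← hgW (y - a)]
      ring
    · -- bound
      filter_upwards [eventually_le_atBot (min 0 x - 1), hev] with a ha hga
      refine Eventually.of_forall (fun y hy => ?_)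
      have hy1 : (1:ℝ) ≤ y - a := by
        have : min 0 x < y := hy.1
        linarith
      have hyM : y ≤ max 0 x := hy.2
      have hWya : W (y - a) ≤ c * Real.exp (Φ * (y - a)) := by
        nth_rewrite 1 [hgW (y - a)]
        have h1 := hgle (y - a) (by linarith)
        have h2 := Real.exp_pos (Φ * (y - a))
        nlinarith
      have hWa : c / 2 * Real.exp (-Φ * a) ≤ W (-a) := by
        nth_rewrite 1 [hgW (-a)]
        have he : Real.exp (Φ * (-a)) = Real.exp (-Φ * a) := by ring_nf
        rw [he]
        have h2 := Real.exp_pos (-Φ * a)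
        nlinarith
      have hWapos : 0 < W (-a) := by
        have : (0:ℝ) < c / 2 * Real.exp (-Φ * a) := by positivity
        linarith
      have hVynn : 0 ≤ V (x - y) := hVnn _
      rw [Real.norm_eq_abs, abs_of_nonneg (div_nonneg (mul_nonneg (hVnn _) (hWnn _)) (hWnn _))]
      rw [div_le_iff₀ hWapos]
      -- key: W (y - a) ≤ 2 * exp(Φ M) * W (-a)
      have key : W (y - a) ≤ 2 * Real.exp (Φ * max 0 x) * W (-a) := by
        have hE : Real.exp (Φ * (y - a)) ≤ Real.exp (Φ * max 0 x) * Real.exp (-Φ * a) := by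
          rw [← Real.exp_add]
          apply Real.exp_le_exp.mpr
          nlinarith [mul_le_mul_of_nonneg_left hyM hΦ]
        have h4 : 2 * Real.exp (Φ * max 0 x) * (c / 2 * Real.exp (-Φ * a)) ≤
            2 * Real.exp (Φ * max 0 x) * W (-a) := by
          apply mul_le_mul_of_nonneg_left hWa
          positivity
        calc W (y - a) ≤ c * Real.exp (Φ * (y - a)) := hWya
          _ ≤ c * (Real.exp (Φ * max 0 x) * Real.exp (-Φ * a)) := by
              exact mul_le_mul_of_nonneg_left hE hc.le
          _ = 2 * Real.exp (Φ * max 0 x) * (c / 2 * Real.exp (-Φ * a)) := by ring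
          _ ≤ 2 * Real.exp (Φ * max 0 x) * W (-a) := h4
      calc V (x - y) * W (y - a)
          ≤ V (x - y) * (2 * Real.exp (Φ * max 0 x) * W (-a)) :=
            mul_le_mul_of_nonneg_left key hVynn
        _ = V (x - y) * (2 * Real.exp (Φ * max 0 x)) * W (-a) := by ring
    · exact hVx.mul_const _
    · refine Eventually.of_forall (fun y _ => ?_)
      simpa [mul_div_assoc] using ((hratio y).const_mul (V (x - y)))
  -- combine
  have hfinal := (hratio x).add (hDCT.const_mul r)
  have hsplit : (fun a => (W (x - a) + r * ∫ y in (0:ℝ)..x, V (x - y) * W (y - a)) / W (-a))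
      = fun a => W (x - a) / W (-a) + r * ∫ y in (0:ℝ)..x, V (x - y) * W (y - a) / W (-a) := by
    funext a
    rw [add_div, mul_div_assoc, ← intervalIntegral.integral_div]
  rw [hsplit]
  -- identify the limit
  have heq : (∫ y in (0:ℝ)..x, V (x - y) * Real.exp (Φ * y))
      = Real.exp (Φ * x) * ∫ z in (0:ℝ)..x, Real.exp (-Φ * z) * V z := by
    have h1 : ∀ y ∈ Set.uIcc (0:ℝ) x, V (x - y) * Real.exp (Φ * y) =
        (fun z => Real.exp (Φ * x) * (Real.exp (-Φ * z) * V z)) (x - y) := by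
      intro y _
      simp only
      rw [← mul_assoc, ← Real.exp_add]
      have : Φ * x + -Φ * (x - y) = Φ * y := by ring
      rw [this]; ring
    rw [intervalIntegral.integral_congr h1,
      intervalIntegral.integral_comp_sub_left
        (fun z => Real.exp (Φ * x) * (Real.exp (-Φ * z) * V z)) x]
    simp only [sub_self, sub_zero]
    rw [intervalIntegral.integral_const_mul]
  rw [heq] at hfinal
  convert hfinal using 2
  ring
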